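/- Let γ, p > 0, η > 1, β < pγ, and let W be a random variable with density f_{β,γ,p,η}. Then for every ξ > β - pγ, E[W^ξ] is finite and E[W^ξ] = K_{β-ξ,γ,p,η} / K_{β,γ,p,η}. -/

import Mathlib

open MeasureTheory Set
open scoped ENNReal NNReal

/-- The scaled lower incomplete gamma function `G_γ(u) = (1/Γ(γ)) ∫_0^u x^(γ-1) e^(-x) dx`. -/
noncomputable def Gl (γ u : ℝ) : ℝ :=
  (1 / Real.Gamma γ) * ∫ x in (0:ℝ)..u, x ^ (γ - 1) * Real.exp (-x)

/-- `K*_{β,γ,p,η} = ∫_{1/η}^1 (1-x)^(γ-1) x^(-β/p-1) dx`. -/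
noncomputable def Kstar (β γ p η : ℝ) : ℝ :=
  ∫ x in (1/η)..(1:ℝ), (1 - x) ^ (γ - 1) * x ^ (-β/p - 1)

/-- `K_{β,γ,p,η} = (Γ(γ-β/p)/(p Γ(γ))) K*_{β,γ,p,η}`. -/
noncomputable def Kc (β γ p η : ℝ) : ℝ :=
  Real.Gamma (γ - β/p) / (p * Real.Gamma γ) * Kstar β γ p η

/-- The incomplete gamma density `f_{β,γ,p,η}(u)` for `u > 0`. -/
noncomputable def figa (β γ p η u : ℝ) : ℝ :=
  (Kc β γ p η)⁻¹ * Gl γ (u ^ p * (η - 1)) * Real.exp (-(u ^ p)) * u ^ (-1 - β)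

section Aux

lemma mellin_integrable {p s b : ℝ} (hp : 0 < p) (hs : -1 < s) (hb : 0 < b) :
    IntegrableOn (fun x : ℝ => x ^ s * Real.exp (-b * x ^ p)) (Ioi 0) := by
  have key := (integrableOn_Ioi_comp_rpow_iff'
    (fun y : ℝ => y ^ ((s + 1) / p - 1) * Real.exp (-b * y)) hp.ne').mpr ?_
  · refine key.congr_fun (fun x hx => ?_) measurableSet_Ioi
    have hx0 : (0:ℝ) < x := hx
    dsimp only
    rw [smul_eq_mul, ← Real.rpow_mul hx0.le, ← mul_assoc, ← Real.rpow_add hx0]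
    congr 2
    field_simp
    ring
  · have := integrableOn_rpow_mul_exp_neg_mul_rpow (p := 1) (s := (s+1)/p - 1)
      (by have h1 : 0 < (s+1)/p := div_pos (by linarith) hp; linarith) one_pos hb
    refine this.congr_fun (fun x hx => ?_) measurableSet_Ioi
    dsimp only
    rw [Real.rpow_one]

lemma step1 {γ p η β : ℝ} (hγ : 0 < γ) (hη : 1 < η) {u : ℝ} (hu : 0 < u) :
    Real.Gamma γ * (Gl γ (u^p*(η-1)) * Real.exp (-(u^p)) * u^(-1-β))
      = ∫ t in Ioo (0:ℝ) (η-1), u^(p*γ-β-1) * t^(γ-1) * Real.exp (-((1+t)*u^p)) := by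
  have hc : 0 < u ^ p := Real.rpow_pos_of_pos hu p
  have hΓ : Real.Gamma γ ≠ 0 := (Real.Gamma_pos_of_pos hγ).ne'
  have comp : (∫ x in (0:ℝ)..(u^p*(η-1)), x^(γ-1)*Real.exp (-x))
      = (u^p) • ∫ t in (0:ℝ)..(η-1), ((u^p)*t)^(γ-1)*Real.exp (-((u^p)*t)) := by
    rw [intervalIntegral.smul_integral_comp_mul_left
      (fun x => x^(γ-1)*Real.exp (-x)) (u^p), mul_zero]
  rw [Gl, comp]
  rw [intervalIntegral.integral_of_le (by linarith), integral_Ioc_eq_integral_Ioo]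
  rw [smul_eq_mul, ← mul_assoc, ← mul_assoc, ← mul_assoc]
  have : Real.Gamma γ * (1 / Real.Gamma γ) = 1 := by field_simp
  rw [this, one_mul, ← MeasureTheory.integral_const_mul, ← MeasureTheory.integral_mul_const,
    ← MeasureTheory.integral_mul_const]
  refine setIntegral_congr_fun measurableSet_Ioo (fun t ht => ?_)
  have ht0 : (0:ℝ) < t := ht.1
  rw [Real.mul_rpow hc.le ht0.le]
  rw [show -((1+t)*u^p) = -(u^p*t) + -(u^p) by ring, Real.exp_add]
  rw [show u^(p*γ-β-1) = u^p * (u^p)^(γ-1) * u^(-1-β) by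
    rw [← Real.rpow_mul hu.le, ← Real.rpow_add hu, ← Real.rpow_add hu]
    congr 1; ring]
  ring

lemma Gl_nonneg {γ v : ℝ} (hγ : 0 < γ) (hv : 0 ≤ v) : 0 ≤ Gl γ v := by
  refine mul_nonneg (le_of_lt (one_div_pos.mpr (Real.Gamma_pos_of_pos hγ))) ?_
  exact intervalIntegral.integral_nonneg hv fun x hx =>
    mul_nonneg (Real.rpow_nonneg hx.1 _) (Real.exp_nonneg _)

lemma continuous_Gl {γ : ℝ} (hγ : 0 < γ) : Continuous (Gl γ) := by
  refine continuous_const.mul (intervalIntegral.continuous_primitive (fun a b => ?_) 0)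
  exact (intervalIntegral.intervalIntegrable_rpow' (by linarith)).mul_continuousOn
    ((Real.continuous_exp.comp continuous_neg).continuousOn)

lemma measurable_gpart {γ : ℝ} (hγ : 0 < γ) (p η β : ℝ) :
    Measurable (fun u : ℝ => Gl γ (u^p*(η-1)) * Real.exp (-(u^p)) * u^(-1-β)) := by
  have h1 : Measurable fun u : ℝ => u ^ p := measurable_id.pow measurable_const
  exact (((continuous_Gl hγ).measurable.comp (h1.mul_const _)).mul
    (Real.measurable_exp.comp h1.neg)).mul (measurable_id.pow measurable_const)

lemma sub_lemma {γ p η β : ℝ} (hη : 1 < η) :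
    ∫ t in Ioo (0:ℝ) (η-1), t^(γ-1)*(1+t)^(β/p-γ) = Kstar β γ p η := by
  have hη0 : (0:ℝ) < η := by linarith
  have himg : (fun t : ℝ => (1+t)⁻¹) '' Ioo 0 (η-1) = Ioo (1/η) 1 := by
    ext x
    simp only [mem_image, mem_Ioo]
    constructor
    · rintro ⟨t, ⟨ht0, ht1⟩, rfl⟩
      have h1t : (0:ℝ) < 1+t := by linarith
      constructor
      · rw [one_div]
        exact inv_strictAnti₀ h1t (by linarith)
      · rw [inv_lt_one_iff₀]
        right; linarith
    · rintro ⟨hx1, hx2⟩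
      have hx0 : 0 < x := lt_trans (by positivity) hx1
      refine ⟨x⁻¹ - 1, ⟨?_, ?_⟩, ?_⟩
      · have : 1 < x⁻¹ := (one_lt_inv₀ hx0).mpr hx2
        linarith
      · have : x⁻¹ < η := by
          rw [one_div] at hx1
          rwa [inv_lt_comm₀ hx0 hη0]
        linarith
      · simp [add_sub_cancel, inv_inv]
  have hderiv : ∀ t ∈ Ioo (0:ℝ) (η-1),
      HasDerivWithinAt (fun t : ℝ => (1+t)⁻¹) (-1/(1+t)^2) (Ioo 0 (η-1)) t := by
    intro t ht
    have h1t : (1:ℝ)+t ≠ 0 := by have := ht.1; intro h; linarith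
    have : HasDerivAt (fun t : ℝ => (1+t)⁻¹) (-1/(1+t)^2) t := by
      have h := ((hasDerivAt_id t).const_add 1).inv h1t
      simp at h; exact h
    exact this.hasDerivWithinAt
  have hinj : InjOn (fun t : ℝ => (1+t)⁻¹) (Ioo 0 (η-1)) := by
    intro a ha b hb h
    have := inv_injective h
    linarith
  have key := integral_image_eq_integral_abs_deriv_smul measurableSet_Ioo hderiv hinj
    (fun x => (1-x)^(γ-1) * x^(-β/p-1))
  rw [himg] at key
  rw [Kstar, intervalIntegral.integral_of_le (by
      rw [div_le_one hη0]; linarith), integral_Ioc_eq_integral_Ioo, key]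
  refine setIntegral_congr_fun measurableSet_Ioo (fun t ht => ?_)
  have ht0 : (0:ℝ) < t := ht.1
  have h1t : (0:ℝ) < 1+t := by linarith
  have e1 : (1:ℝ) - (1+t)⁻¹ = t * (1+t)⁻¹ := by field_simp; ring
  have eabs : |(-1/(1+t)^2 : ℝ)| = 1/(1+t)^2 := by
    rw [show (-1/(1+t)^2 : ℝ) = -(1/(1+t)^2) by ring, abs_neg, abs_of_pos (by positivity)]
  have e2 : ((1:ℝ)/(1+t)^2) = ((1+t):ℝ)^(-2:ℝ) := by
    rw [Real.rpow_neg h1t.le, ← Real.rpow_natCast (1+t) 2]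
    norm_num
  have e3 : ((1+t):ℝ)^(-2:ℝ) * (((1+t):ℝ)^(-(γ-1)) * ((1+t):ℝ)^(β/p+1)) = ((1+t):ℝ)^(β/p-γ) := by
    rw [← Real.rpow_add h1t, ← Real.rpow_add h1t]
    congr 1; ring
  rw [smul_eq_mul, eabs, e1, Real.mul_rpow ht0.le (by positivity),
    Real.inv_rpow h1t.le, ← Real.rpow_neg h1t.le,
    Real.inv_rpow h1t.le, ← Real.rpow_neg h1t.le, e2,
    show (-(-β/p-1) : ℝ) = β/p+1 by ring, ← e3]
  ring

lemma key_lemma {γ p η β : ℝ} (hγ : 0 < γ) (hp : 0 < p) (hη : 1 < η) (hβ : β < p*γ) :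
    IntegrableOn (fun u => Gl γ (u^p*(η-1)) * Real.exp (-(u^p)) * u^(-1-β)) (Ioi (0:ℝ)) ∧
      ∫ u in Ioi (0:ℝ), Gl γ (u^p*(η-1)) * Real.exp (-(u^p)) * u^(-1-β) = Kc β γ p η := by
  set g : ℝ → ℝ := fun u => Gl γ (u^p*(η-1)) * Real.exp (-(u^p)) * u^(-1-β) with hg
  set H : ℝ → ℝ → ℝ :=
    fun u t => u^(p*γ-β-1) * t^(γ-1) * Real.exp (-((1+t)*u^p)) with hH
  have hq : (-1:ℝ) < p*γ-β-1 := by linarith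
  have hΓγ : 0 < Real.Gamma γ := Real.Gamma_pos_of_pos hγ
  have hexp : 0 < γ - β/p := by
    rw [sub_pos, div_lt_iff₀ hp]; linarith
  have hΓ2 : 0 < Real.Gamma (γ - β/p) := Real.Gamma_pos_of_pos hexp
  have Hmeas : Measurable (Function.uncurry H) := by
    apply Measurable.mul
    · exact (measurable_fst.pow measurable_const).mul (measurable_snd.pow measurable_const)
    · exact Real.measurable_exp.comp
        (((measurable_const.add measurable_snd).mul (measurable_fst.pow measurable_const)).neg)
  have Hnn : ∀ u t : ℝ, 0 < u → 0 < t → 0 ≤ H u t := fun u t hu ht =>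
    mul_nonneg (mul_nonneg (Real.rpow_nonneg hu.le _) (Real.rpow_nonneg ht.le _))
      (Real.exp_nonneg _)
  have tInt : ∀ u : ℝ, 0 < u → IntegrableOn (fun t => H u t) (Ioo 0 (η-1)) := by
    intro u hu
    have hb : 0 < u ^ p := Real.rpow_pos_of_pos hu p
    have base : IntegrableOn (fun t : ℝ => t ^ (γ-1) * Real.exp (-(u^p) * t ^ (1:ℝ)))
        (Ioi (0:ℝ)) := mellin_integrable one_pos (by linarith) hb
    have base2' : IntegrableOn
        (fun t : ℝ => u^(p*γ-β-1) * Real.exp (-(u^p)) * (t ^ (γ-1) * Real.exp (-(u^p) * t ^ (1:ℝ))))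
        (Ioi (0:ℝ)) := base.const_mul _
    have base2 := base2'.mono_set (Ioo_subset_Ioi_self : Ioo (0:ℝ) (η-1) ⊆ Ioi 0)
    refine base2.congr_fun (fun t ht => ?_) measurableSet_Ioo
    simp only [hH]
    rw [Real.rpow_one, show -((1+t)*u^p) = -(u^p)*t + -(u^p) by ring, Real.exp_add]
    ring
  have uInt : ∀ t : ℝ, 0 < t → IntegrableOn (fun u => H u t) (Ioi (0:ℝ)) := by
    intro t ht
    have hb : (0:ℝ) < 1 + t := by linarith
    have base : IntegrableOn
        (fun u : ℝ => t^(γ-1) * (u ^ (p*γ-β-1) * Real.exp (-(1+t) * u ^ p))) (Ioi (0:ℝ)) :=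
      (mellin_integrable hp hq hb).const_mul (t^(γ-1))
    refine base.congr_fun (fun u hu => ?_) measurableSet_Ioi
    simp only [hH]
    rw [neg_mul]
    ring
  have uVal : ∀ t : ℝ, 0 < t →
      ∫ u in Ioi (0:ℝ), H u t
        = (1/p) * Real.Gamma (γ - β/p) * (t^(γ-1) * (1+t)^(β/p-γ)) := by
    intro t ht
    have hb : (0:ℝ) < 1 + t := by linarith
    have e0 : ∫ u in Ioi (0:ℝ), H u t
        = ∫ u in Ioi (0:ℝ), t^(γ-1) * (u^(p*γ-β-1) * Real.exp (-(1+t)*u^p)) := by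
      refine setIntegral_congr_fun measurableSet_Ioi (fun u hu => ?_)
      rw [neg_mul]; ring
    rw [e0, MeasureTheory.integral_const_mul, integral_rpow_mul_exp_neg_mul_rpow hp hq hb]
    have e1 : -(p*γ-β-1+1)/p = β/p - γ := by field_simp; ring
    have e2 : (p*γ-β-1+1)/p = γ - β/p := by rw [eq_sub_iff_add_eq, ← add_div, div_eq_iff hp.ne']; ring
    rw [e1, e2]
    ring
  set A := ∫⁻ u in Ioi (0:ℝ), ∫⁻ t in Ioo (0:ℝ) (η-1), ENNReal.ofReal (H u t) with hAdef
  set B := ∫⁻ t in Ioo (0:ℝ) (η-1), ∫⁻ u in Ioi (0:ℝ), ENNReal.ofReal (H u t) with hBdef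
  have hswap : A = B := by
    exact lintegral_lintegral_swap
      ((ENNReal.measurable_ofReal.comp Hmeas).aemeasurable)
  have hA : A = ∫⁻ u in Ioi (0:ℝ), ENNReal.ofReal (Real.Gamma γ * g u) := by
    refine setLIntegral_congr_fun measurableSet_Ioi (fun u hu => ?_)
    have nn : 0 ≤ᵐ[volume.restrict (Ioo (0:ℝ) (η-1))] fun t => H u t := by
      filter_upwards [ae_restrict_mem measurableSet_Ioo] with t ht
      exact Hnn u t hu ht.1
    rw [← MeasureTheory.ofReal_integral_eq_lintegral_ofReal (tInt u hu) nn]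
    rw [← step1 hγ hη hu]
  have LInt : IntegrableOn (fun t : ℝ => t^(γ-1)*(1+t)^(β/p-γ)) (Ioo 0 (η-1)) := by
    have i1 : IntervalIntegrable (fun t : ℝ => t^(γ-1)) volume 0 (η-1) :=
      intervalIntegral.intervalIntegrable_rpow' (by linarith)
    have i2 := i1.mul_continuousOn (g := fun t : ℝ => (1+t)^(β/p-γ)) ?_
    · rwa [intervalIntegrable_iff_integrableOn_Ioo_of_le (by linarith)] at i2
    · refine ContinuousOn.rpow_const ((continuous_const.add continuous_id).continuousOn)
        (fun t ht => Or.inl ?_)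
      rw [uIcc_of_le (by linarith : (0:ℝ) ≤ η-1)] at ht
      have := ht.1
      intro h; linarith
  have L_nn : 0 ≤ ∫ t in Ioo (0:ℝ) (η-1), t^(γ-1)*(1+t)^(β/p-γ) := by
    refine setIntegral_nonneg measurableSet_Ioo (fun t ht => ?_)
    exact mul_nonneg (Real.rpow_nonneg ht.1.le _)
      (Real.rpow_nonneg (by linarith [ht.1] : (0:ℝ) ≤ 1+t) _)
  have hB : B = ENNReal.ofReal
      ((1/p) * Real.Gamma (γ - β/p) * ∫ t in Ioo (0:ℝ) (η-1), t^(γ-1)*(1+t)^(β/p-γ)) := by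
    have c1 : B = ∫⁻ t in Ioo (0:ℝ) (η-1),
        ENNReal.ofReal ((1/p) * Real.Gamma (γ-β/p) * (t^(γ-1)*(1+t)^(β/p-γ))) := by
      refine setLIntegral_congr_fun measurableSet_Ioo (fun t ht => ?_)
      have nn : 0 ≤ᵐ[volume.restrict (Ioi (0:ℝ))] fun u => H u t := by
        filter_upwards [ae_restrict_mem measurableSet_Ioi] with u hu
        exact Hnn u t hu ht.1
      rw [← MeasureTheory.ofReal_integral_eq_lintegral_ofReal (uInt t ht.1) nn, uVal t ht.1]
    rw [c1, ← MeasureTheory.ofReal_integral_eq_lintegral_ofReal ((LInt).const_mul _) ?_,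
      MeasureTheory.integral_const_mul]
    filter_upwards [ae_restrict_mem measurableSet_Ioo] with t ht
    exact mul_nonneg (by positivity) (mul_nonneg (Real.rpow_nonneg ht.1.le _)
      (Real.rpow_nonneg (by linarith [ht.1] : (0:ℝ) ≤ 1+t) _))
  have Ks_eq : ∫ t in Ioo (0:ℝ) (η-1), t^(γ-1)*(1+t)^(β/p-γ) = Kstar β γ p η := sub_lemma hη
  have Kcval : Real.Gamma γ * Kc β γ p η
      = (1/p) * Real.Gamma (γ - β/p) * ∫ t in Ioo (0:ℝ) (η-1), t^(γ-1)*(1+t)^(β/p-γ) := by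
    rw [Ks_eq, Kc]
    field_simp
  have Bval : B = ENNReal.ofReal (Real.Gamma γ * Kc β γ p η) := by rw [hB, Kcval]
  have g_nn : ∀ u ∈ Ioi (0:ℝ), 0 ≤ g u := by
    intro u hu
    have hu0 : (0:ℝ) < u := hu
    refine mul_nonneg (mul_nonneg (Gl_nonneg hγ ?_) (Real.exp_nonneg _))
      (Real.rpow_nonneg hu0.le _)
    exact mul_nonneg (Real.rpow_nonneg hu0.le _) (by linarith)
  have gmeas : Measurable g := measurable_gpart hγ p η β
  have g_nn_ae : 0 ≤ᵐ[volume.restrict (Ioi (0:ℝ))] fun u => Real.Gamma γ * g u := by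
    filter_upwards [ae_restrict_mem measurableSet_Ioi] with u hu
    exact mul_nonneg hΓγ.le (g_nn u hu)
  have int0 : IntegrableOn (fun u => Real.Gamma γ * g u) (Ioi (0:ℝ)) := by
    refine ⟨(gmeas.const_mul _).aestronglyMeasurable, ?_⟩
    rw [hasFiniteIntegral_iff_ofReal g_nn_ae]
    rw [← hA, hswap, Bval]
    exact ENNReal.ofReal_lt_top
  have val0 : ∫ u in Ioi (0:ℝ), Real.Gamma γ * g u = Real.Gamma γ * Kc β γ p η := by
    rw [MeasureTheory.integral_eq_lintegral_of_nonneg_ae g_nn_ae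
      (gmeas.const_mul _).aestronglyMeasurable, ← hA, hswap, Bval, ENNReal.toReal_ofReal]
    have Kc_nn : 0 ≤ Kc β γ p η := by
      rw [Kc, ← Ks_eq]
      exact mul_nonneg (div_nonneg hΓ2.le (by positivity)) L_nn
    exact mul_nonneg hΓγ.le Kc_nn
  constructor
  · have h2 : IntegrableOn (fun u => (Real.Gamma γ)⁻¹ * (Real.Gamma γ * g u)) (Ioi (0:ℝ)) :=
      int0.const_mul _
    refine h2.congr_fun (fun u hu => ?_) measurableSet_Ioi
    field_simp
  · rw [MeasureTheory.integral_const_mul] at val0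
    exact mul_left_cancel₀ hΓγ.ne' val0

end Aux

lemma gpart_nonneg {γ p η β u : ℝ} (hγ : 0 < γ) (hη : 1 < η) (hu : 0 < u) :
    0 ≤ Gl γ (u^p*(η-1)) * Real.exp (-(u^p)) * u^(-1-β) :=
  mul_nonneg (mul_nonneg (Gl_nonneg hγ (mul_nonneg (Real.rpow_nonneg hu.le _) (by linarith)))
    (Real.exp_nonneg _)) (Real.rpow_nonneg hu.le _)

theorem iga_moments {Ω : Type*} [MeasurableSpace Ω] (μ : Measure Ω) [IsProbabilityMeasure μ]
    (γ p η β ξ : ℝ) (hγ : 0 < γ) (hp : 0 < p) (hη : 1 < η) (hβ : β < p * γ)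
    (W : Ω → ℝ) (hW : Measurable W)
    (hdist : Measure.map W μ =
      MeasureTheory.volume.withDensity
        (fun u => ENNReal.ofReal (if 0 < u then figa β γ p η u else 0)))
    (hξ : β - p * γ < ξ) :
    Integrable (fun ω => W ω ^ ξ) μ ∧
      (∫ ω, W ω ^ ξ ∂μ) = Kc (β - ξ) γ p η / Kc β γ p η := by
  obtain ⟨hInt1, hVal1⟩ := key_lemma hγ hp hη hβ
  obtain ⟨hInt2, hVal2⟩ := key_lemma hγ hp hη (show β - ξ < p*γ by linarith)
  have hKcnn : 0 ≤ Kc β γ p η := by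
    rw [← hVal1]
    exact setIntegral_nonneg measurableSet_Ioi (fun u hu => gpart_nonneg hγ hη hu)
  have hfig_nn : ∀ u : ℝ, 0 < u → 0 ≤ figa β γ p η u := by
    intro u hu
    have := gpart_nonneg (γ := γ) (p := p) (η := η) (β := β) hγ hη hu
    have h2 : figa β γ p η u
        = (Kc β γ p η)⁻¹ * (Gl γ (u^p*(η-1)) * Real.exp (-(u^p)) * u^(-1-β)) := by
      simp only [figa]; ring
    rw [h2]
    exact mul_nonneg (inv_nonneg.mpr hKcnn) this
  set r : ℝ → ℝ := fun u => if 0 < u then figa β γ p η u else 0 with hr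
  have hr_meas : Measurable r := by
    refine Measurable.ite (measurableSet_lt measurable_const measurable_id) ?_ measurable_const
    have h := (measurable_gpart hγ p η β).const_mul (Kc β γ p η)⁻¹
    have heq : figa β γ p η
        = fun u => (Kc β γ p η)⁻¹ * (Gl γ (u^p*(η-1)) * Real.exp (-(u^p)) * u^(-1-β)) := by
      funext u; simp only [figa]; ring
    rw [heq]
    exact h
  have hr_nn : ∀ u, 0 ≤ r u := by
    intro u
    by_cases h : 0 < u
    · simpa [hr, h] using hfig_nn u h
    · simp [hr, h]
  set d : ℝ → ℝ≥0∞ := fun u => ENNReal.ofReal (r u) with hd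
  have hd_meas : Measurable d := ENNReal.measurable_ofReal.comp hr_meas
  have haesm : AEStronglyMeasurable (fun x : ℝ => x ^ ξ) (Measure.map W μ) :=
    (measurable_id.pow measurable_const).aestronglyMeasurable
  have heqξ : ∀ x ∈ Ioi (0:ℝ), x ^ ξ * figa β γ p η x
      = (Kc β γ p η)⁻¹ * (Gl γ (x^p*(η-1)) * Real.exp (-(x^p)) * x^(-1-(β-ξ))) := by
    intro x hx
    have hx0 : (0:ℝ) < x := hx
    simp only [figa]
    rw [show (-1-(β-ξ) : ℝ) = ξ + (-1-β) by ring, Real.rpow_add hx0]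
    ring
  have hIntOn : IntegrableOn (fun x : ℝ => x ^ ξ * figa β γ p η x) (Ioi (0:ℝ)) := by
    have h : IntegrableOn (fun x : ℝ =>
        (Kc β γ p η)⁻¹ * (Gl γ (x^p*(η-1)) * Real.exp (-(x^p)) * x^(-1-(β-ξ)))) (Ioi (0:ℝ)) :=
      hInt2.const_mul ((Kc β γ p η)⁻¹)
    refine h.congr_fun (fun x hx => (heqξ x hx).symm) measurableSet_Ioi
  have hind : (fun x : ℝ => x ^ ξ * (d x).toReal)
      = (Ioi (0:ℝ)).indicator (fun x => x ^ ξ * figa β γ p η x) := by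
    funext x
    by_cases h : 0 < x
    · rw [indicator_of_mem (mem_Ioi.mpr h)]
      simp only [hd, hr, if_pos h]
      rw [ENNReal.toReal_ofReal (hfig_nn x h)]
    · rw [indicator_of_notMem (by simpa [mem_Ioi] using h)]
      simp [hd, hr, if_neg h]
  have i1 : Integrable (fun x : ℝ => x ^ ξ) (Measure.map W μ) := by
    rw [hdist]
    rw [integrable_withDensity_iff hd_meas (ae_of_all _ fun x => ENNReal.ofReal_lt_top)]
    rw [hind, integrable_indicator_iff measurableSet_Ioi]
    exact hIntOn
  constructor
  · exact (integrable_map_measure haesm hW.aemeasurable).mp i1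
  · have v1 : ∫ ω, W ω ^ ξ ∂μ = ∫ x, x ^ ξ ∂(Measure.map W μ) :=
      (integral_map hW.aemeasurable haesm).symm
    rw [v1, hdist]
    have hnn_meas : Measurable fun x => (r x).toNNReal :=
      measurable_real_toNNReal.comp hr_meas
    have hd2 : d = fun x => (((r x).toNNReal : ℝ≥0) : ℝ≥0∞) := rfl
    rw [hd2, integral_withDensity_eq_integral_smul hnn_meas (fun x => x ^ ξ)]
    have hind2 : (fun x : ℝ => (r x).toNNReal • x ^ ξ)
        = (Ioi (0:ℝ)).indicator (fun x =>
            (Kc β γ p η)⁻¹ * (Gl γ (x^p*(η-1)) * Real.exp (-(x^p)) * x^(-1-(β-ξ)))) := by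
      funext x
      by_cases h : 0 < x
      · rw [indicator_of_mem (mem_Ioi.mpr h), NNReal.smul_def,
          Real.coe_toNNReal _ (hr_nn x), ← heqξ x h]
        simp only [hr, if_pos h]
        rw [smul_eq_mul]
        ring
      · rw [indicator_of_notMem (by simpa [mem_Ioi] using h)]
        simp [hr, h]
    rw [hind2, integral_indicator measurableSet_Ioi, MeasureTheory.integral_const_mul, hVal2,
      div_eq_mul_inv]
    ring
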